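/- For n ≥ 1 and real τ with |τ| ≤ π, put W_n(τ) := Σ_{k>n} (e^{ikτ} − 1)²/(2k²). Then uniformly in n and τ, W_n(τ) = (1/(2n))·(1 + O(1/(1 + n·min(|τ|, π − |τ|)))); that is, there is an absolute constant C with |2n·W_n(τ) − 1| ≤ C/(1 + n·min(|τ|, π − |τ|)) for all n ≥ 1 and |τ| ≤ π. -/

import Mathlib

open Filter Finset Complex

set_option maxHeartbeats 1000000

lemma hasSum_telescope (a : ℕ → ℝ) (h0 : Tendsto a atTop (nhds 0))
    (hs : Summable (fun j => a j - a (j+1))) :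
    HasSum (fun j => a j - a (j+1)) (a 0) := by
  rw [hs.hasSum_iff_tendsto_nat]
  have h : (fun N => ∑ i ∈ Finset.range N, (a i - a (i+1))) = fun N => a 0 - a N :=
    funext fun N => Finset.sum_range_sub' a N
  rw [h]
  simpa using tendsto_const_nhds.sub h0

lemma summable_base (n : ℕ) : Summable (fun j : ℕ => (1:ℝ) / ((n:ℝ) + 1 + j) ^ 2) := by
  have h : Summable (fun k : ℕ => (1:ℝ) / (k:ℝ) ^ 2) :=
    (Real.summable_one_div_nat_pow (p := 2)).mpr one_lt_two
  have h2 := (summable_nat_add_iff (f := fun k : ℕ => (1:ℝ)/(k:ℝ)^2) (n+1)).mpr h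
  refine h2.congr fun j => ?_
  push_cast
  ring_nf

lemma tendsto_inv_add (c : ℝ) : Tendsto (fun j : ℕ => 1 / (c + j)) atTop (nhds 0) := by
  have h : Tendsto (fun j : ℕ => c + (j:ℝ)) atTop atTop :=
    tendsto_atTop_add_const_left _ _ tendsto_natCast_atTop_atTop
  simpa [one_div, Pi.inv_def] using h.inv_tendsto_atTop

lemma telescope_inv (c : ℝ) (hc : 1 ≤ c) :
    HasSum (fun j : ℕ => 1 / (c + j) - 1 / (c + (j + 1))) (1 / c) := by
  have key : ∀ j : ℕ, (1:ℝ)/(c+j) - 1/(c+(j+1)) = 1/((c+j)*(c+(j+1))) := by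
    intro j
    have h1 : (0:ℝ) < c + j := by positivity
    have h2 : (0:ℝ) < c + (j+1) := by positivity
    field_simp
    ring
  have hs : Summable (fun j : ℕ => 1 / (c + j) - 1 / (c + ((j:ℕ)+1))) := by
    refine Summable.of_nonneg_of_le ?_ ?_ (summable_base 0)
    · intro j
      rw [key j]
      positivity
    · intro j
      rw [key j]
      have hj : (0:ℝ) ≤ (j:ℝ) := Nat.cast_nonneg j
      apply one_div_le_one_div_of_le
      · positivity
      · push_cast
        nlinarith [hc, hj]
  have h0 := hasSum_telescope (fun j : ℕ => 1 / (c + j)) (tendsto_inv_add c) ?_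
  · simpa using h0
  · exact hs.congr fun j => by push_cast; ring_nf

noncomputable def S (n : ℕ) (u : ℂ) : ℂ :=
  ∑' j : ℕ, u ^ (n + 1 + j) / ((n + 1 + j : ℕ) : ℂ) ^ 2

noncomputable def r (n : ℕ) : ℝ := ∑' j : ℕ, (1:ℝ) / ((n:ℝ) + 1 + j) ^ 2

lemma norm_term (n j : ℕ) (u : ℂ) (hu : ‖u‖ = 1) :
    ‖u ^ (n + 1 + j) / ((n + 1 + j : ℕ) : ℂ) ^ 2‖ = 1 / ((n:ℝ) + 1 + j) ^ 2 := by
  rw [norm_div, norm_pow, hu, one_pow, norm_pow, Complex.norm_natCast]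
  push_cast
  ring_nf

lemma summable_S (n : ℕ) (u : ℂ) (hu : ‖u‖ = 1) :
    Summable (fun j : ℕ => u ^ (n + 1 + j) / ((n + 1 + j : ℕ) : ℂ) ^ 2) := by
  apply Summable.of_norm
  exact (summable_base n).congr fun j => (norm_term n j u hu).symm

lemma r_le (n : ℕ) (hn : 1 ≤ n) : r n ≤ 1 / n := by
  have hc : (1:ℝ) ≤ (n:ℝ) := by exact_mod_cast hn
  have ht := telescope_inv (n:ℝ) hc
  rw [r, ← ht.tsum_eq]
  refine Summable.tsum_le_tsum ?_ (summable_base n) ht.summable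
  intro j
  have h1 : (0:ℝ) < (n:ℝ) + j := by positivity
  have h2 : (0:ℝ) < (n:ℝ) + (j+1) := by positivity
  have key : (1:ℝ)/((n:ℝ)+j) - 1/((n:ℝ)+(j+1)) = 1/(((n:ℝ)+j)*((n:ℝ)+(j+1))) := by
    field_simp
    ring
  rw [key]
  apply one_div_le_one_div_of_le
  · positivity
  · nlinarith [Nat.cast_nonneg (α := ℝ) j]

lemma r_lower (n : ℕ) : 1 / ((n:ℝ) + 1) ≤ r n := by
  have hc : (1:ℝ) ≤ (n:ℝ) + 1 := by have := Nat.cast_nonneg (α := ℝ) n; linarith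
  have ht := telescope_inv ((n:ℝ) + 1) hc
  rw [r, ← ht.tsum_eq]
  refine Summable.tsum_le_tsum ?_ ht.summable (summable_base n)
  intro j
  have h1 : (0:ℝ) < (n:ℝ) + 1 + j := by positivity
  have h2 : (0:ℝ) < (n:ℝ) + 1 + (j+1) := by positivity
  have key : (1:ℝ)/((n:ℝ)+1+j) - 1/((n:ℝ)+1+(j+1)) = 1/(((n:ℝ)+1+j)*((n:ℝ)+1+(j+1))) := by
    field_simp
    ring
  calc (1:ℝ)/((n:ℝ)+1+j) - 1/((n:ℝ)+1+(j+1)) = 1/(((n:ℝ)+1+j)*((n:ℝ)+1+(j+1))) := key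
    _ ≤ 1/((n:ℝ)+1+j)^2 := by
        apply one_div_le_one_div_of_le
        · positivity
        · nlinarith [Nat.cast_nonneg (α := ℝ) j]

lemma abs_S_le_r (n : ℕ) (u : ℂ) (hu : ‖u‖ = 1) : ‖S n u‖ ≤ r n := by
  rw [S, r]
  refine (norm_tsum_le_tsum_norm ?_).trans ?_
  · exact (summable_base n).congr fun j => (norm_term n j u hu).symm
  · exact le_of_eq (tsum_congr fun j => norm_term n j u hu)

lemma abs_S_le (n : ℕ) (hn : 1 ≤ n) (u : ℂ) (hu : ‖u‖ = 1) :
    ‖S n u‖ ≤ 1 / n :=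
  (abs_S_le_r n u hu).trans (r_le n hn)

lemma S_one (n : ℕ) : S n 1 = ((r n : ℝ) : ℂ) := by
  rw [S, r, Complex.ofReal_tsum]
  refine tsum_congr fun j => ?_
  push_cast
  ring

lemma abs_one_sub_mul_S (n : ℕ) (u : ℂ) (hu : ‖u‖ = 1) :
    ‖(1 - u) * S n u‖ ≤ 2 / ((n:ℝ) + 1) ^ 2 := by
  set F : ℕ → ℂ := fun j => u ^ (n + 1 + j) / ((n + 1 + j : ℕ) : ℂ) ^ 2 with hF
  set D : ℕ → ℂ := fun j =>
    u ^ (n + 2 + j) * (1 / ((n + 1 + j : ℕ) : ℂ) ^ 2 - 1 / ((n + 2 + j : ℕ) : ℂ) ^ 2) with hD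
  set d : ℕ → ℝ := fun j => 1 / ((n:ℝ) + 1 + j) ^ 2 with hd'
  have hsumF : Summable F := summable_S n u hu
  have hdmono : ∀ j : ℕ, 0 ≤ d j - d (j + 1) := by
    intro j
    have h1 : (0:ℝ) < (n:ℝ) + 1 + j := by positivity
    have h2 : ((n:ℝ) + 1 + j) ^ 2 ≤ ((n:ℝ) + 1 + (j+1:ℕ)) ^ 2 := by push_cast; nlinarith
    have := one_div_le_one_div_of_le (by positivity : (0:ℝ) < ((n:ℝ)+1+j)^2) h2
    simp only [hd']
    linarith
  have habsD : ∀ j : ℕ, ‖D j‖ ≤ d j - d (j + 1) := by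
    intro j
    have hcast : (1 / ((n + 1 + j : ℕ) : ℂ) ^ 2 - 1 / ((n + 2 + j : ℕ) : ℂ) ^ 2)
        = ((d j - d (j + 1) : ℝ) : ℂ) := by
      simp only [hd']
      push_cast
      ring
    rw [hD]
    simp only []
    rw [hcast, norm_mul, norm_pow, hu, one_pow, one_mul,
      Complex.norm_real, Real.norm_eq_abs, _root_.abs_of_nonneg (hdmono j)]
  have hd : Summable (fun j : ℕ => d j - d (j + 1)) := by
    have h2 : Summable (fun j : ℕ => d (j + 1)) :=
      (summable_nat_add_iff (f := d) 1).mpr (summable_base n)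
    exact (summable_base n).sub h2
  have hsnorm : Summable (fun j : ℕ => ‖D j‖) :=
    Summable.of_nonneg_of_le (fun j => norm_nonneg _) habsD hd
  have hsumD : Summable D := Summable.of_norm hsnorm
  have htel : HasSum (fun j : ℕ => d j - d (j + 1)) (d 0) := by
    have h0 : Tendsto d atTop (nhds 0) := by
      have hmul := (tendsto_inv_add ((n:ℝ)+1)).mul (tendsto_inv_add ((n:ℝ)+1))
      rw [mul_zero] at hmul
      refine Tendsto.congr (fun j => ?_) hmul
      simp only [hd']
      rw [div_mul_div_comm, one_mul, ← sq]
    exact hasSum_telescope d h0 hd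
  have hFs : HasSum (fun j => F (j + 1)) (S n u - F 0) := by
    refine (hasSum_nat_add_iff (f := F) 1).mpr ?_
    simpa [show S n u = ∑' j, F j from rfl] using hsumF.hasSum
  have hkey : (fun j => (1 - u) * F j) = fun j => F j - F (j + 1) - D j := by
    funext j
    rw [hF, hD]
    simp only []
    push_cast
    ring
  have hs1 : HasSum (fun j => (1 - u) * F j) ((1 - u) * S n u) := hsumF.hasSum.mul_left _
  have hs2 : HasSum (fun j => (1 - u) * F j)
      (S n u - (S n u - F 0) - ∑' j, D j) := by
    rw [hkey]
    exact (hsumF.hasSum.sub hFs).sub hsumD.hasSum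
  have hid : (1 - u) * S n u = F 0 - ∑' j, D j := by
    have := hs1.unique hs2
    rw [this]
    ring
  rw [hid]
  refine (norm_sub_le _ _).trans ?_
  have e1 : ‖F 0‖ = 1 / ((n:ℝ) + 1) ^ 2 := by
    rw [hF]
    simpa using norm_term n 0 u hu
  have e2 : ‖∑' j, D j‖ ≤ d 0 := by
    refine (norm_tsum_le_tsum_norm hsnorm).trans ?_
    calc ∑' j, ‖D j‖ ≤ ∑' j, (d j - d (j + 1)) := Summable.tsum_le_tsum habsD hsnorm hd
      _ = d 0 := htel.tsum_eq
  have e3 : d 0 = 1 / ((n:ℝ) + 1) ^ 2 := by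
    simp only [hd']
    norm_num
  have e4 : 2 / ((n:ℝ)+1) ^ 2 = 1 / ((n:ℝ)+1) ^ 2 + 1 / ((n:ℝ)+1) ^ 2 := by ring
  linarith [e2, e3.le, e3.ge, e1.le, e1.ge]

lemma summable_ite (n : ℕ) (u : ℂ) (hu : ‖u‖ = 1) :
    Summable (fun k : ℕ => if n < k then u ^ k / ((k : ℕ) : ℂ) ^ 2 else 0) := by
  apply Summable.of_norm
  refine Summable.of_nonneg_of_le (fun k => norm_nonneg _) (fun k => ?_)
    ((Real.summable_one_div_nat_pow (p := 2)).mpr one_lt_two)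
  by_cases h : n < k
  · rw [if_pos h, norm_div, norm_pow, hu, one_pow, norm_pow,
      Complex.norm_natCast]
  · rw [if_neg h]
    simp

lemma S_eq_tsum_ite (n : ℕ) (u : ℂ) :
    (∑' k : ℕ, if n < k then u ^ k / ((k : ℕ) : ℂ) ^ 2 else 0) = S n u := by
  rw [S]
  refine (Function.Injective.tsum_eq (g := fun j : ℕ => n + 1 + j) ?_ ?_).symm.trans ?_
  · intro a b h
    simp only [] at h
    omega
  · intro k hk
    rw [Function.mem_support] at hk
    by_cases h : n < k
    · exact ⟨k - (n+1), by simp only []; omega⟩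
    · exact absurd (if_neg h) hk
  · refine tsum_congr fun j => ?_
    rw [if_pos (by omega)]

lemma abs_one_sub_exp (θ : ℝ) :
    ‖1 - Complex.exp ((θ:ℂ) * I)‖ = 2 * |Real.sin (θ/2)| := by
  rw [Complex.norm_def, Complex.normSq_apply]
  simp only [Complex.sub_re, Complex.sub_im, Complex.one_re, Complex.one_im,
    Complex.exp_ofReal_mul_I_re, Complex.exp_ofReal_mul_I_im]
  have h2 : Real.sin (θ/2) ^ 2 = 1/2 - Real.cos θ / 2 := by
    have := Real.sin_sq_eq_half_sub (θ/2)
    rw [show 2 * (θ/2) = θ by ring] at this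
    linarith
  have hs : (1 - Real.cos θ) * (1 - Real.cos θ) + (0 - Real.sin θ) * (0 - Real.sin θ)
      = (2 * |Real.sin (θ/2)|) ^ 2 := by
    have h1 := Real.sin_sq_add_cos_sq θ
    rw [mul_pow, _root_.sq_abs]
    nlinarith
  rw [hs, Real.sqrt_sq (by positivity)]

lemma sin_abs_eq (τ : ℝ) (h : |τ| ≤ Real.pi) : |Real.sin τ| = Real.sin |τ| := by
  rcases abs_cases τ with ⟨h1, h2⟩ | ⟨h1, h2⟩
  · rw [h1, _root_.abs_of_nonneg (Real.sin_nonneg_of_nonneg_of_le_pi h2 (by rwa [h1] at h))]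
  · rw [h1, Real.sin_neg]
    have hge : -Real.pi ≤ τ := by
      rw [h1] at h; linarith
    exact _root_.abs_of_nonpos (Real.sin_nonpos_of_nonpos_of_neg_pi_le h2.le hge)

lemma sin_tau_lower (τ : ℝ) (h : |τ| ≤ Real.pi) :
    2 / Real.pi * min |τ| (Real.pi - |τ|) ≤ |Real.sin τ| := by
  have hpi := Real.pi_pos
  rw [sin_abs_eq τ h]
  rcases le_or_gt |τ| (Real.pi/2) with hc | hc
  · have hsin := Real.mul_le_sin (abs_nonneg τ) hc
    have h5 : 2 / Real.pi * min |τ| (Real.pi - |τ|) ≤ 2 / Real.pi * |τ| := by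
      apply mul_le_mul_of_nonneg_left (min_le_left _ _) (by positivity)
    linarith
  · rw [(Real.sin_pi_sub |τ|).symm]
    have hsin := Real.mul_le_sin (x := Real.pi - |τ|) (by linarith) (by linarith)
    have h5 : 2 / Real.pi * min |τ| (Real.pi - |τ|) ≤ 2 / Real.pi * (Real.pi - |τ|) := by
      apply mul_le_mul_of_nonneg_left (min_le_right _ _) (by positivity)
    linarith

lemma sin_half_lower (τ : ℝ) (h : |τ| ≤ Real.pi) :
    1 / Real.pi * min |τ| (Real.pi - |τ|) ≤ |Real.sin (τ/2)| := by
  have hpi := Real.pi_pos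
  have h3 : |τ/2| = |τ|/2 := by rw [abs_div]; norm_num
  have h1 : |τ/2| ≤ Real.pi / 2 := by rw [h3]; linarith
  have h2 := Real.mul_abs_le_abs_sin h1
  rw [h3] at h2
  have h4 : 1 / Real.pi * min |τ| (Real.pi - |τ|) ≤ 1 / Real.pi * |τ| := by
    apply mul_le_mul_of_nonneg_left (min_le_left _ _) (by positivity)
  have h6 : 2 / Real.pi * (|τ|/2) = 1 / Real.pi * |τ| := by ring
  linarith

/-- `W n τ = ∑_{k > n} (e^{ikτ} − 1)² / (2k²)`. -/
noncomputable def W (n : ℕ) (τ : ℝ) : ℂ :=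
  ∑' k : ℕ, if n < k then (Complex.exp (Complex.I * k * τ) - 1) ^ 2 / (2 * k ^ 2) else 0

lemma W_decomp (n : ℕ) (τ : ℝ) :
    W n τ = (S n (Complex.exp (((2*τ:ℝ):ℂ) * I)) - 2 * S n (Complex.exp (((τ:ℝ):ℂ) * I))
      + S n 1) / 2 := by
  set u1 : ℂ := Complex.exp (((τ:ℝ):ℂ) * I) with hu1'
  set u2 : ℂ := Complex.exp (((2*τ:ℝ):ℂ) * I) with hu2'
  have hu1 : ‖u1‖ = 1 := Complex.norm_exp_ofReal_mul_I τ
  have hu2 : ‖u2‖ = 1 := Complex.norm_exp_ofReal_mul_I (2*τ)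
  have h2 : HasSum (fun k : ℕ => if n < k then u2 ^ k / ((k:ℕ):ℂ) ^ 2 else 0) (S n u2) := by
    rw [← S_eq_tsum_ite n u2]; exact (summable_ite n u2 hu2).hasSum
  have h1 : HasSum (fun k : ℕ => if n < k then u1 ^ k / ((k:ℕ):ℂ) ^ 2 else 0) (S n u1) := by
    rw [← S_eq_tsum_ite n u1]; exact (summable_ite n u1 hu1).hasSum
  have h0 : HasSum (fun k : ℕ => if n < k then (1:ℂ) ^ k / ((k:ℕ):ℂ) ^ 2 else 0) (S n 1) := by
    rw [← S_eq_tsum_ite n 1]; exact (summable_ite n 1 (by simp)).hasSum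
  have hcombo := (((h2.sub (h1.mul_left 2)).add h0).div_const 2)
  rw [W, ← hcombo.tsum_eq]
  refine tsum_congr fun k => ?_
  by_cases h : n < k
  · simp only [if_pos h]
    have ek : Complex.exp (Complex.I * k * τ) = u1 ^ k := by
      rw [hu1', ← Complex.exp_nat_mul]
      congr 1
      ring
    have e2 : u2 = u1 ^ 2 := by
      rw [hu1', hu2', sq, ← Complex.exp_add]
      congr 1
      push_cast
      ring
    have e2k : u2 ^ k = (u1 ^ k) ^ 2 := by
      rw [e2, ← pow_mul, mul_comm, pow_mul]
    rw [ek, e2k, one_pow]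
    ring
  · simp only [if_neg h]
    ring

theorem Wn_asymptotics :
    ∃ C : ℝ, ∀ n : ℕ, 1 ≤ n → ∀ τ : ℝ, |τ| ≤ Real.pi →
      ‖(2 * n * W n τ - 1 : ℂ)‖ ≤
        C / (1 + n * min |τ| (Real.pi - |τ|)) := by
  have hπ : (3:ℝ) < Real.pi := Real.pi_gt_three
  refine ⟨4 * (Real.pi + 1), fun n hn τ hτ => ?_⟩
  set m := min |τ| (Real.pi - |τ|) with hm'
  set x := (n:ℝ) with hx'
  have hx : (1:ℝ) ≤ x := by rw [hx']; exact_mod_cast hn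
  have hm0 : 0 ≤ m := le_min (abs_nonneg τ) (by linarith [abs_nonneg τ])
  have hmhalf : m ≤ Real.pi / 2 := by
    rcases le_total |τ| (Real.pi/2) with hc | hc
    · exact (min_le_left _ _).trans hc
    · exact (min_le_right _ _).trans (by linarith)
  have hden : (0:ℝ) < 1 + x * m := by nlinarith
  -- the OSCILLATION claim
  have claim : ∀ u : ℂ, ‖u‖ = 1 → 2 / Real.pi * m ≤ ‖1 - u‖ →
      x * ‖S n u‖ ≤ (Real.pi + 1) / (1 + x * m) := by
    intro u hu hl
    have hS0 : 0 ≤ ‖S n u‖ := norm_nonneg _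
    rcases le_or_gt (x * m) Real.pi with hc | hc
    · have h1 : x * ‖S n u‖ ≤ 1 := by
        have := abs_S_le n hn u hu
        calc x * ‖S n u‖ ≤ x * (1/x) := by
              apply mul_le_mul_of_nonneg_left _ (by linarith)
              rw [hx']; exact this
          _ = 1 := by field_simp
      rw [le_div_iff₀ hden]
      nlinarith
    · have hmpos : 0 < m := by nlinarith
      have hl0 : (0:ℝ) < 2 / Real.pi * m := by positivity
      have hs2 : ‖S n u‖ * (2 / Real.pi * m) ≤ 2 / (x+1)^2 := by
        calc ‖S n u‖ * (2 / Real.pi * m)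
            ≤ ‖S n u‖ * ‖1 - u‖ :=
              mul_le_mul_of_nonneg_left hl hS0
          _ = ‖(1 - u) * S n u‖ := by rw [norm_mul, mul_comm]
          _ ≤ 2 / ((n:ℝ)+1)^2 := abs_one_sub_mul_S n u hu
          _ = 2 / (x+1)^2 := by rw [hx']
      have hS1 : ‖S n u‖ ≤ Real.pi / ((x+1)^2 * m) := by
        rw [le_div_iff₀ (by positivity)]
        have hpne : Real.pi ≠ 0 := Real.pi_pos.ne'
        have hxne : ((x:ℝ)+1) ≠ 0 := by linarith
        have key := mul_le_mul_of_nonneg_right hs2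
          (by positivity : (0:ℝ) ≤ (x+1)^2 * (Real.pi/2))
        have e1 : ‖S n u‖ * (2 / Real.pi * m) * ((x+1)^2 * (Real.pi/2))
            = ‖S n u‖ * ((x+1)^2 * m) := by
          field_simp
        have e2 : 2 / (x+1)^2 * ((x+1)^2 * (Real.pi/2)) = Real.pi := by
          field_simp
        linarith
      have hfin : x * (Real.pi / ((x+1)^2 * m)) ≤ (Real.pi + 1) / (1 + x * m) := by
        rw [show x * (Real.pi / ((x+1)^2 * m)) = (x * Real.pi) / ((x+1)^2 * m) by ring,
          div_le_div_iff₀ (by positivity) hden]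
        nlinarith [mul_le_mul_of_nonneg_left hc.le (by linarith : (0:ℝ) ≤ x),
          mul_nonneg (mul_nonneg (by linarith : (0:ℝ) ≤ Real.pi + 1)
            (by linarith : (0:ℝ) ≤ 2*x+1)) hm0]
      calc x * ‖S n u‖ ≤ x * (Real.pi / ((x+1)^2 * m)) :=
            mul_le_mul_of_nonneg_left hS1 (by linarith)
        _ ≤ (Real.pi + 1) / (1 + x * m) := hfin
  -- the constant term
  have hconst : ‖(n:ℂ) * S n 1 - 1‖ ≤ (Real.pi + 1) / (1 + x * m) := by
    have hr1 : r n ≤ 1 / x := by rw [hx']; exact r_le n hn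
    have hr2 : 1 / (x + 1) ≤ r n := by rw [hx']; exact r_lower n
    have hcast : (n:ℂ) * S n 1 - 1 = ((x * r n - 1 : ℝ) : ℂ) := by
      rw [S_one, hx']; push_cast; ring
    rw [hcast, Complex.norm_real, Real.norm_eq_abs]
    have hxr1 : x * r n ≤ 1 := by
      calc x * r n ≤ x * (1/x) := mul_le_mul_of_nonneg_left hr1 (by linarith)
        _ = 1 := by field_simp
    have hxr2 : 1 - 1/(x+1) ≤ x * r n := by
      have h1 : x * (1/(x+1)) ≤ x * r n := mul_le_mul_of_nonneg_left hr2 (by linarith)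
      have h2 : x * (1/(x+1)) = 1 - 1/(x+1) := by field_simp; ring
      linarith
    have habs : |x * r n - 1| ≤ 1/(x+1) := by
      rw [abs_le]; constructor <;> linarith
    refine habs.trans ?_
    rw [div_le_div_iff₀ (by linarith) hden]
    nlinarith [mul_le_mul_of_nonneg_left hmhalf (by linarith : (0:ℝ) ≤ x)]
  -- decomposition
  set u1 : ℂ := Complex.exp (((τ:ℝ):ℂ) * I) with hu1'
  set u2 : ℂ := Complex.exp (((2*τ:ℝ):ℂ) * I) with hu2'
  have hu1 : ‖u1‖ = 1 := Complex.norm_exp_ofReal_mul_I τ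
  have hu2 : ‖u2‖ = 1 := Complex.norm_exp_ofReal_mul_I (2*τ)
  have hl1 : 2 / Real.pi * m ≤ ‖1 - u1‖ := by
    rw [hu1', abs_one_sub_exp τ]
    have h2 := sin_half_lower τ hτ
    rw [hm', show (2:ℝ) / Real.pi * (min |τ| (Real.pi - |τ|))
      = 2 * (1 / Real.pi * (min |τ| (Real.pi - |τ|))) by ring]
    linarith
  have hl2 : 2 / Real.pi * m ≤ ‖1 - u2‖ := by
    rw [hu2', abs_one_sub_exp (2*τ), show (2*τ)/2 = τ by ring]
    have h2 := sin_tau_lower τ hτ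
    have h0 : (0:ℝ) ≤ |Real.sin τ| := abs_nonneg _
    rw [hm']
    linarith
  have hE : 2 * (n:ℂ) * W n τ - 1
      = (n:ℂ) * S n u2 - 2 * (n:ℂ) * S n u1 + ((n:ℂ) * S n 1 - 1) := by
    rw [W_decomp n τ, ← hu1', ← hu2']
    ring
  have htri : ‖2 * (n:ℂ) * W n τ - 1‖
      ≤ x * ‖S n u2‖ + 2 * (x * ‖S n u1‖)
        + ‖(n:ℂ) * S n 1 - 1‖ := by
    rw [hE]
    refine (norm_add_le _ _).trans ?_
    have h1 : ‖(n:ℂ) * S n u2 - 2 * (n:ℂ) * S n u1‖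
        ≤ x * ‖S n u2‖ + 2 * (x * ‖S n u1‖) := by
      refine (norm_sub_le _ _).trans ?_
      rw [norm_mul, norm_mul, norm_mul, Complex.norm_natCast, Complex.norm_two]
      rw [hx']
      ring_nf
      rfl
    linarith [h1]
  have hb2 := claim u2 hu2 hl2
  have hb1 := claim u1 hu1 hl1
  have hfinal : 4 * (Real.pi + 1) / (1 + x * m) = 4 * ((Real.pi + 1) / (1 + x * m)) := by
    ring
  calc ‖2 * (n:ℂ) * W n τ - 1‖
      ≤ x * ‖S n u2‖ + 2 * (x * ‖S n u1‖)
        + ‖(n:ℂ) * S n 1 - 1‖ := htri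
    _ ≤ (Real.pi + 1) / (1 + x * m) + 2 * ((Real.pi + 1) / (1 + x * m))
        + (Real.pi + 1) / (1 + x * m) := by
        have h2 : (0:ℝ) ≤ 2 := by norm_num
        gcongr
    _ = 4 * (Real.pi + 1) / (1 + x * m) := by ring
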